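/- Let ñ : S → ℕ be a function on a finite set S satisfying: for every positive integer k dividing at least one value n_v, there exist cyclic subgroups C_i ⊆ Z/kZ and a bijection φ_k from { v ∈ S : k ∤ n_v } to the disjoint union of the sets C_i ∖ {0} with n_v ≡ φ_k(v) mod k for all such v. Suppose gcd of all n_v is 1, and let N = max_v n_v. Then φ(N) ≤ 2; in particular N ∈ {1,2,3,4,6}. -/

import Mathlib

/-- The Assumption of the paper: for every positive integer `k` dividing at least one
value `n v`, there exist cyclic subgroups `Cᵢ ⊆ ℤ/kℤ` and a bijection from
`{v : k ∤ n v}` to the disjoint union of the `Cᵢ ∖ {0}` under which `n v` is congruent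
mod `k` to its image. -/
def SatisfiesAssumption {S : Type*} [Fintype S] (n : S → ℕ) : Prop :=
  ∀ k : ℕ, 0 < k → (∃ v, k ∣ n v) →
    ∃ (ι : Type) (_ : Fintype ι) (C : ι → AddSubgroup (ZMod k))
      (e : {v : S // ¬ k ∣ n v} ≃ (i : ι) × {c : C i // c ≠ 0}),
      (∀ i, IsAddCyclic (C i)) ∧
      ∀ v : {v : S // ¬ k ∣ n v}, ((n v.1 : ZMod k)) = (((e v).2 : C (e v).1) : ZMod k)

open Finset

/-- helper: membership in zmultiples via gcd divisibility -/
lemma mem_zmul (k x y : ℕ) (h : Nat.gcd y k ∣ x) :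
    (x : ZMod k) ∈ AddSubgroup.zmultiples (y : ZMod k) := by
  obtain ⟨t, ht⟩ := h
  rw [AddSubgroup.mem_zmultiples_iff]
  refine ⟨Nat.gcdA y k * t, ?_⟩
  have hb := Nat.gcd_eq_gcd_ab y k
  have hx : (x : ℤ) = (y * Nat.gcdA y k + k * Nat.gcdB y k) * t := by
    rw [← hb]; exact_mod_cast congrArg (fun z : ℕ => (z : ℤ)) ht
  have : ((x : ℤ) : ZMod k) = ((Nat.gcdA y k * t) : ℤ) • (y : ZMod k) := by
    rw [hx]; push_cast
    rw [zsmul_eq_mul]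
    push_cast
    rw [ZMod.natCast_self]
    ring
  simpa using this.symm

lemma cast_ne_zero (k x : ℕ) (hk : 0 < k) (h : ¬ k ∣ x) : (x : ZMod k) ≠ 0 := by
  intro h0
  haveI : NeZero k := ⟨hk.ne'⟩
  exact h ((ZMod.natCast_eq_zero_iff x k).mp h0)

lemma modeq_eq (k a b : ℕ) (h : a ≡ b [MOD k]) (hbk : b < k) (hab : a < b + k)
    (hba : b < a + k) : a = b := by
  obtain ⟨c, hc⟩ := h.dvd
  have h1 : (b : ℤ) - a < k := by push_cast; omega
  have h2 : -(k : ℤ) < (b : ℤ) - a := by push_cast; omega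
  have hk0 : (0 : ℤ) < k := by exact_mod_cast Nat.pos_of_ne_zero (by omega)
  have hc0 : c = 0 := by
    by_contra hne
    rcases lt_or_gt_of_ne hne with h' | h'
    · have : (k : ℤ) * c ≤ -k := by nlinarith
      linarith [hc ▸ h2]
    · have : (k : ℤ) ≤ k * c := by nlinarith
      linarith [hc ▸ h1]
  rw [hc0, mul_zero] at hc
  omega

lemma key {S : Type*} [Fintype S] (n : S → ℕ) (hass : SatisfiesAssumption n)
    (k : ℕ) (hk : 0 < k) (hdvd : ∃ v, k ∣ n v) (r s : ZMod k)
    (hr : r ≠ 0) (hs : s ≠ 0) (hrs : s ∈ AddSubgroup.zmultiples r) :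
    (Finset.univ.filter (fun v => ((n v : ZMod k)) = r)).card ≤
      (Finset.univ.filter (fun v => ((n v : ZMod k)) = s)).card := by
  classical
  haveI : NeZero k := ⟨hk.ne'⟩
  obtain ⟨ι, hι, C, e, -, he⟩ := hass k hk hdvd
  have hcount : ∀ t : ZMod k, t ≠ 0 →
      (Finset.univ.filter (fun v => ((n v : ZMod k)) = t)).card =
      (Finset.univ.filter (fun i : ι => t ∈ C i)).card := by
    intro t ht
    have hvne : ∀ {v : S}, v ∈ Finset.univ.filter (fun v => ((n v : ZMod k)) = t) →
        ¬ k ∣ n v := by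
      intro v hv hdv
      have h1 : ((n v : ZMod k)) = t := (mem_filter.mp hv).2
      have h2 : ((n v : ZMod k)) = 0 := (ZMod.natCast_eq_zero_iff _ _).mpr hdv
      exact ht (h1 ▸ h2 ▸ rfl)
    refine Finset.card_bij'
      (fun v hv => (e ⟨v, hvne hv⟩).1)
      (fun i hi => (e.symm ⟨i, ⟨⟨t, (mem_filter.mp hi).2⟩,
        fun hc => ht (by simpa using congrArg Subtype.val hc)⟩⟩).1)
      ?_ ?_ ?_ ?_
    · intro v hv
      simp only [mem_filter, mem_univ, true_and]
      have h2 := he ⟨v, hvne hv⟩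
      have h3 : ((n v : ZMod k)) = t := (mem_filter.mp hv).2
      rw [h3] at h2
      exact h2 ▸ (e ⟨v, hvne hv⟩).2.1.2
    · intro i hi
      simp only [mem_filter, mem_univ, true_and]
      have h2 := he (e.symm ⟨i, ⟨⟨t, (mem_filter.mp hi).2⟩,
        fun hc => ht (by simpa using congrArg Subtype.val hc)⟩⟩)
      rw [Equiv.apply_symm_apply] at h2
      exact h2
    · intro v hv
      have hcoe : (((e ⟨v, hvne hv⟩).2 : C (e ⟨v, hvne hv⟩).1) : ZMod k) = t := by
        rw [← he ⟨v, hvne hv⟩]; exact (mem_filter.mp hv).2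
      have h4 : (⟨(e ⟨v, hvne hv⟩).1, ⟨⟨t, by exact hcoe ▸ (e ⟨v, hvne hv⟩).2.1.2⟩,
          fun hc => ht (by simpa using congrArg Subtype.val hc)⟩⟩ :
          (i : ι) × {c : C i // c ≠ 0}) = e ⟨v, hvne hv⟩ := by
        refine Eq.trans (congrArg (Sigma.mk (e ⟨v, hvne hv⟩).1) ?_) (Sigma.eta _)
        exact Subtype.ext (Subtype.ext hcoe.symm)
      simp only [h4, Equiv.symm_apply_apply]
    · intro i hi
      have hgen : ∀ (X : (i : ι) × {c : C i // c ≠ 0}) (h : ¬ k ∣ n (e.symm X).1),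
          (e ⟨(e.symm X).1, h⟩).1 = X.1 := by
        intro X h
        have hX : (⟨(e.symm X).1, h⟩ : {v : S // ¬ k ∣ n v}) = e.symm X := Subtype.ext rfl
        rw [hX, Equiv.apply_symm_apply]
      exact hgen _ _
  rw [hcount r hr, hcount s hs]
  apply Finset.card_le_card
  intro i hi
  simp only [mem_filter, mem_univ, true_and] at hi ⊢
  obtain ⟨m, rfl⟩ := AddSubgroup.mem_zmultiples_iff.mp hrs
  exact AddSubgroup.zsmul_mem _ hi m

section
variable {S : Type*} [Fintype S]

/-- counting in a residue class equals counting an exact value, when the class meets `[1,N]` once -/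
lemma cnt_eq_count (n : S → ℕ) (N k x : ℕ) (hub : ∀ v, 1 ≤ n v ∧ n v ≤ N)
    (hxk : x < k) (hNk : N < x + k) :
    (Finset.univ.filter (fun v => ((n v : ZMod k)) = (x : ZMod k))).card =
      (Finset.univ.filter (fun v => n v = x)).card := by
  have hmodeq : ∀ a b : ℕ, ((a : ZMod k)) = (b : ZMod k) → a ≡ b [MOD k] :=
    fun a b h => (ZMod.natCast_eq_natCast_iff a b k).mp h
  congr 1
  apply Finset.filter_congr
  intro v _
  constructor
  · intro h
    have h1 := hmodeq _ _ h
    have := (hub v).1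
    have := (hub v).2
    exact modeq_eq k (n v) x h1 hxk (by omega) (by omega)
  · intro h; rw [h]

lemma cnt_lower (n : S → ℕ) (k x₀ N : ℕ) (hne : x₀ ≠ N)
    (hcast : ((N : ZMod k)) = (x₀ : ZMod k)) :
    (Finset.univ.filter (fun v => n v = x₀)).card +
      (Finset.univ.filter (fun v => n v = N)).card ≤
      (Finset.univ.filter (fun v => ((n v : ZMod k)) = (x₀ : ZMod k))).card := by
  classical
  rw [← Finset.card_union_of_disjoint]
  · apply Finset.card_le_card
    intro v hv
    simp only [mem_union, mem_filter, mem_univ, true_and] at hv ⊢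
    rcases hv with h | h
    · rw [h]
    · rw [h]; exact hcast
  · rw [Finset.disjoint_left]
    intro v hv hv'
    simp only [mem_filter] at hv hv'
    exact hne (hv.2 ▸ hv'.2 ▸ rfl)

end

lemma gcd_sub_left (N x : ℕ) (h : x ≤ N) : Nat.gcd (N - x) N = Nat.gcd x N := by
  apply Nat.dvd_antisymm
  · refine Nat.dvd_gcd ?_ (Nat.gcd_dvd_right _ _)
    have h1 := Nat.gcd_dvd_left (N - x) N
    have h2 := Nat.gcd_dvd_right (N - x) N
    have h3 := Nat.dvd_sub h2 h1
    rwa [Nat.sub_sub_self h] at h3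
  · refine Nat.dvd_gcd ?_ (Nat.gcd_dvd_right _ _)
    exact Nat.dvd_sub (Nat.gcd_dvd_right x N) (Nat.gcd_dvd_left x N)

lemma gcd_sub_right (x N : ℕ) (h : x ≤ N) : Nat.gcd x (N - x) = Nat.gcd x N := by
  apply Nat.dvd_antisymm
  · refine Nat.dvd_gcd (Nat.gcd_dvd_left _ _) ?_
    have h1 := Nat.dvd_add (Nat.gcd_dvd_right x (N - x)) (Nat.gcd_dvd_left x (N - x))
    rwa [Nat.sub_add_cancel h] at h1
  · exact Nat.dvd_gcd (Nat.gcd_dvd_left _ _)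
      (Nat.dvd_sub (Nat.gcd_dvd_right x N) (Nat.gcd_dvd_left x N))

section
variable {S : Type*} [Fintype S]

lemma step1 (n : S → ℕ) (hass : SatisfiesAssumption n) (N : ℕ)
    (hub : ∀ v, 1 ≤ n v ∧ n v ≤ N) (hmax : ∃ v, n v = N) (hN5 : 5 ≤ N)
    (u : ℕ) (hu2 : 2 ≤ u) (huN : u + 2 ≤ N) (hcop : Nat.Coprime u N) :
    ∀ v, 1 < Nat.gcd (n v) N := by
  intro v₀
  by_contra hcon
  push_neg at hcon
  set y := n v₀ with hy
  have hy1 : 1 ≤ y := (hub v₀).1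
  have hyN : y ≤ N := (hub v₀).2
  have hgpos : 0 < Nat.gcd y N := Nat.gcd_pos_of_pos_left N hy1
  have hgcd1 : Nat.gcd y N = 1 := by omega
  have hyneN : y ≠ N := by
    intro h
    rw [h, Nat.gcd_self] at hgcd1
    omega
  have hyltN : y < N := by omega
  have hN0 : 0 < N := by omega
  have hdvdN : ∃ v, N ∣ n v := by
    obtain ⟨w, hw⟩ := hmax
    exact ⟨w, by rw [hw]⟩
  have hnotN : ∀ z : ℕ, 0 < z → z < N → ¬ N ∣ z := by
    intro z h1 h2 hd
    exact absurd (Nat.le_of_dvd h1 hd) (by omega)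
  have c2 : 1 ≤ (Finset.univ.filter (fun v => ((n v : ZMod N)) = (y : ZMod N))).card := by
    exact Finset.card_pos.mpr ⟨v₀, by simp [hy]⟩
  have c1 := key n hass N hN0 hdvdN (y : ZMod N) ((1 : ℕ) : ZMod N)
    (cast_ne_zero N y hN0 (hnotN y (by omega) hyltN))
    (cast_ne_zero N 1 hN0 (hnotN 1 one_pos (by omega)))
    (mem_zmul N 1 y (by rw [hgcd1]))
  have cN1 := key n hass N hN0 hdvdN (y : ZMod N) (((N - 1 : ℕ)) : ZMod N)
    (cast_ne_zero N y hN0 (hnotN y (by omega) hyltN))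
    (cast_ne_zero N (N - 1) hN0 (hnotN (N - 1) (by omega) (by omega)))
    (mem_zmul N (N - 1) y (by rw [hgcd1]; exact one_dvd _))
  have eN1 : (Finset.univ.filter (fun v => ((n v : ZMod N)) = ((N - 1 : ℕ) : ZMod N))).card =
      (Finset.univ.filter (fun v => n v = N - 1)).card :=
    cnt_eq_count n N N (N - 1) hub (by omega) (by omega)
  have ew' : ∃ w', n w' = N - 1 := by
    have : 0 < (Finset.univ.filter (fun v => n v = N - 1)).card := by omega
    obtain ⟨w', hw'⟩ := Finset.card_pos.mp this
    exact ⟨w', (Finset.mem_filter.mp hw').2⟩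
  obtain ⟨w', hw'⟩ := ew'
  set k := N - 1 with hkdef
  have hk0 : 0 < k := by omega
  have hdvdk : ∃ v, k ∣ n v := ⟨w', hw' ▸ dvd_refl k⟩
  have ineq := key n hass k hk0 hdvdk ((1 : ℕ) : ZMod k) (u : ZMod k)
    (cast_ne_zero k 1 hk0 (fun h => by have := Nat.le_of_dvd one_pos h; omega))
    (cast_ne_zero k u hk0 (fun h => by have := Nat.le_of_dvd (by omega) h; omega))
    (mem_zmul k u 1 (by rw [Nat.gcd_one_left]; exact one_dvd u))
  have castN : ((N : ZMod k)) = ((1 : ℕ) : ZMod k) := by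
    have hNeq : N = 1 + k := by omega
    rw [hNeq]
    push_cast [ZMod.natCast_self]
    ring
  have b1 := cnt_lower n k 1 N (by omega) castN
  have b2 : (Finset.univ.filter (fun v => ((n v : ZMod k)) = (u : ZMod k))).card =
      (Finset.univ.filter (fun v => n v = u)).card :=
    cnt_eq_count n N k u hub (by omega) (by omega)
  have b3 : (Finset.univ.filter (fun v => ((n v : ZMod N)) = (u : ZMod N))).card =
      (Finset.univ.filter (fun v => n v = u)).card :=
    cnt_eq_count n N N u hub (by omega) (by omega)
  have b4 := key n hass N hN0 hdvdN (u : ZMod N) ((1 : ℕ) : ZMod N)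
    (cast_ne_zero N u hN0 (hnotN u (by omega) (by omega)))
    (cast_ne_zero N 1 hN0 (hnotN 1 one_pos (by omega)))
    (mem_zmul N 1 u (by rw [Nat.Coprime.gcd_eq_one hcop]))
  have b5 : (Finset.univ.filter (fun v => ((n v : ZMod N)) = ((1 : ℕ) : ZMod N))).card =
      (Finset.univ.filter (fun v => n v = 1)).card :=
    cnt_eq_count n N N 1 hub (by omega) (by omega)
  have bN : 1 ≤ (Finset.univ.filter (fun v => n v = N)).card := by
    obtain ⟨w, hw⟩ := hmax
    exact Finset.card_pos.mpr ⟨w, by simp [hw]⟩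
  omega

end

section
variable {S : Type*} [Fintype S]

lemma pat1 (n : S → ℕ) (hass : SatisfiesAssumption n) (N x₀ x₁ : ℕ)
    (hub : ∀ v, 1 ≤ n v ∧ n v ≤ N) (hmax : ∃ v, n v = N)
    (h0 : 0 < x₀) (h01 : x₀ < x₁) (h1N : x₁ + x₀ < N)
    (hg : Nat.gcd x₀ N = Nat.gcd x₁ N)
    (hpres : 1 ≤ (Finset.univ.filter (fun v => n v = x₀)).card) : False := by
  set k := N - x₀ with hkdef
  have hkx : k + x₀ = N := by omega
  have hx0k : x₀ < k := by omega
  have hx1k : x₁ < k := by omega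
  have hN0 : 0 < N := by omega
  have hk0 : 0 < k := by omega
  have hnotN : ∀ z : ℕ, 0 < z → z < N → ¬ N ∣ z := by
    intro z h1 h2 hd
    exact absurd (Nat.le_of_dvd h1 hd) (by omega)
  have hnotk : ∀ z : ℕ, 0 < z → z < k → ¬ k ∣ z := by
    intro z h1 h2 hd
    exact absurd (Nat.le_of_dvd h1 hd) (by omega)
  have hdvdN : ∃ v, N ∣ n v := by
    obtain ⟨w, hw⟩ := hmax
    exact ⟨w, by rw [hw]⟩
  have e1 : (Finset.univ.filter (fun v => ((n v : ZMod N)) = (x₀ : ZMod N))).card =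
      (Finset.univ.filter (fun v => n v = x₀)).card :=
    cnt_eq_count n N N x₀ hub (by omega) (by omega)
  have e2 := key n hass N hN0 hdvdN (x₀ : ZMod N) (k : ZMod N)
    (cast_ne_zero N x₀ hN0 (hnotN x₀ h0 (by omega)))
    (cast_ne_zero N k hN0 (hnotN k hk0 (by omega)))
    (mem_zmul N k x₀ (by rw [← gcd_sub_left N x₀ (by omega)]; exact Nat.gcd_dvd_left _ _))
  have e3 : (Finset.univ.filter (fun v => ((n v : ZMod N)) = (k : ZMod N))).card =
      (Finset.univ.filter (fun v => n v = k)).card :=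
    cnt_eq_count n N N k hub (by omega) (by omega)
  have ew : ∃ w, n w = k := by
    have : 0 < (Finset.univ.filter (fun v => n v = k)).card := by omega
    obtain ⟨w, hw⟩ := Finset.card_pos.mp this
    exact ⟨w, (Finset.mem_filter.mp hw).2⟩
  obtain ⟨w, hw⟩ := ew
  have hdvdk : ∃ v, k ∣ n v := ⟨w, hw ▸ dvd_refl k⟩
  have main := key n hass k hk0 hdvdk (x₀ : ZMod k) (x₁ : ZMod k)
    (cast_ne_zero k x₀ hk0 (hnotk x₀ h0 hx0k))
    (cast_ne_zero k x₁ hk0 (hnotk x₁ (by omega) hx1k))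
    (mem_zmul k x₁ x₀ (by
      rw [hkdef, gcd_sub_right x₀ N (by omega), hg]
      exact Nat.gcd_dvd_left _ _))
  have castN : ((N : ZMod k)) = (x₀ : ZMod k) := by
    have hNeq : N = x₀ + k := by omega
    rw [hNeq]
    push_cast [ZMod.natCast_self]
    ring
  have low := cnt_lower n k x₀ N (by omega) castN
  have up : (Finset.univ.filter (fun v => ((n v : ZMod k)) = (x₁ : ZMod k))).card =
      (Finset.univ.filter (fun v => n v = x₁)).card :=
    cnt_eq_count n N k x₁ hub (by omega) (by omega)
  have tr1 : (Finset.univ.filter (fun v => ((n v : ZMod N)) = (x₁ : ZMod N))).card =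
      (Finset.univ.filter (fun v => n v = x₁)).card :=
    cnt_eq_count n N N x₁ hub (by omega) (by omega)
  have tr2 := key n hass N hN0 hdvdN (x₁ : ZMod N) (x₀ : ZMod N)
    (cast_ne_zero N x₁ hN0 (hnotN x₁ (by omega) (by omega)))
    (cast_ne_zero N x₀ hN0 (hnotN x₀ h0 (by omega)))
    (mem_zmul N x₀ x₁ (by rw [← hg]; exact Nat.gcd_dvd_left _ _))
  have mN : 1 ≤ (Finset.univ.filter (fun v => n v = N)).card := by
    obtain ⟨w', hw'⟩ := hmax
    exact Finset.card_pos.mpr ⟨w', by simp [hw']⟩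
  omega

end

lemma coprime_add_right (x y : ℕ) (h : Nat.Coprime x y) : Nat.Coprime (x + y) y :=
  (Nat.coprime_add_self_left).mpr h

lemma coprime_add_left (x y : ℕ) (h : Nat.Coprime x y) : Nat.Coprime (x + y) x := by
  rw [add_comm]
  exact coprime_add_right y x h.symm

section
variable {S : Type*} [Fintype S]

lemma contra_main (n : S → ℕ) (hass : SatisfiesAssumption n)
    (hgcd : Finset.univ.gcd n = 1) (N : ℕ)
    (hub : ∀ v, 1 ≤ n v ∧ n v ≤ N) (hmax : ∃ v, n v = N)
    (hN5 : 5 ≤ N) (hN6 : N ≠ 6) : False := by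
  classical
  have hN0 : 0 < N := by omega
  have hNne : N ≠ 0 := by omega
  have hdvdN : ∃ v, N ∣ n v := by
    obtain ⟨w, hw⟩ := hmax
    exact ⟨w, by rw [hw]⟩
  have hprime_wit : ∀ p : ℕ, p.Prime → p ∣ N → ∃ v, ¬ p ∣ n v := by
    intro p pp hpN
    by_contra hall
    push_neg at hall
    have hdg : p ∣ Finset.univ.gcd n := Finset.dvd_gcd (fun v _ => hall v)
    rw [hgcd] at hdg
    have := Nat.le_of_dvd one_pos hdg
    have := pp.two_le
    omega
  have hnotN : ∀ z : ℕ, 0 < z → z < N → ¬ N ∣ z := by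
    intro z h1 h2 hd
    exact absurd (Nat.le_of_dvd h1 hd) (by omega)
  by_cases hX : ∃ p : ℕ, p.Prime ∧ p ∣ N ∧ p ≠ 2 ∧ 5 ≤ p ^ N.factorization p
  · -- Case X : an odd prime power component ≥ 5
    obtain ⟨p, pp, hpN, hp2, hP5⟩ := hX
    set P := p ^ N.factorization p with hPdef
    set B := N / P with hBdef
    have hPB : P * B = N := Nat.ordProj_mul_ordCompl_eq_self N p
    have hcopPB : Nat.Coprime P B := (Nat.coprime_ordCompl pp hNne).pow_left _
    have hpodd : ¬ 2 ∣ P := by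
      intro h
      have h2p : (2 : ℕ) ∣ p := Nat.Prime.dvd_of_dvd_pow Nat.prime_two h
      exact hp2 ((Nat.prime_dvd_prime_iff_eq Nat.prime_two pp).mp h2p).symm
    have hB1 : 1 ≤ B := by
      rcases Nat.eq_zero_or_pos B with h | h
      · rw [h, mul_zero] at hPB; omega
      · exact h
    by_cases hB : B = 1
    · -- N is an odd prime power
      have hNP : N = P := by rw [← hPB, hB, mul_one]
      have hstep := step1 n hass N hub hmax hN5 2 (le_refl 2) (by omega)
        (Nat.coprime_two_left.mpr (Nat.odd_iff.mpr (by
          have : ¬ 2 ∣ N := hNP ▸ hpodd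
          omega)))
      obtain ⟨vp, hvp⟩ := hprime_wit p pp hpN
      have hg := hstep vp
      have hgdvd : Nat.gcd (n vp) N ∣ P := hNP ▸ Nat.gcd_dvd_right _ _
      obtain ⟨i, hi, hgi⟩ := (Nat.dvd_prime_pow pp).mp hgdvd
      have hi1 : 1 ≤ i := by
        by_contra hi0
        push_neg at hi0
        interval_cases i
        simp at hgi
        omega
      have hpg : p ∣ Nat.gcd (n vp) N := by
        rw [hgi]
        exact dvd_pow_self p (by omega)
      exact hvp (hpg.trans (Nat.gcd_dvd_left _ _))
    · have hB2 : 2 ≤ B := by omega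
      have hBN : B < N := by nlinarith
      have hstep := step1 n hass N hub hmax hN5 (P + B) (by omega)
        (by nlinarith)
        (by
          rw [← hPB]
          exact Nat.Coprime.mul_right (coprime_add_left P B hcopPB)
            (coprime_add_right P B hcopPB))
      obtain ⟨vp, hvp⟩ := hprime_wit p pp hpN
      set y := n vp with hy
      have hy1 : 1 ≤ y := (hub vp).1
      have hyN : y ≤ N := (hub vp).2
      have hyneN : y ≠ N := fun h => hvp (h ▸ hpN)
      have hgy := hstep vp
      have hpg : ¬ p ∣ Nat.gcd y N := fun h => hvp (h.trans (Nat.gcd_dvd_left _ _))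
      have hcopgP : Nat.Coprime P (Nat.gcd y N) := (pp.coprime_iff_not_dvd.mpr hpg).pow_left _
      have hgB : Nat.gcd y N ∣ B := by
        apply Nat.Coprime.dvd_of_dvd_mul_left hcopgP.symm
        rw [hPB]
        exact Nat.gcd_dvd_right _ _
      have cY : 1 ≤ (Finset.univ.filter (fun v => ((n v : ZMod N)) = (y : ZMod N))).card :=
        Finset.card_pos.mpr ⟨vp, by simp [hy]⟩
      have cB := key n hass N hN0 hdvdN (y : ZMod N) (B : ZMod N)
        (cast_ne_zero N y hN0 (hnotN y (by omega) (by omega)))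
        (cast_ne_zero N B hN0 (hnotN B (by omega) hBN))
        (mem_zmul N B y hgB)
      have eB : (Finset.univ.filter (fun v => ((n v : ZMod N)) = (B : ZMod N))).card =
          (Finset.univ.filter (fun v => n v = B)).card :=
        cnt_eq_count n N N B hub (by omega) (by omega)
      have gcdB : Nat.gcd B N = B := Nat.gcd_eq_left ⟨P, by rw [mul_comm]; exact hPB.symm⟩
      have gcd2B : Nat.gcd (2 * B) N = B := by
        rw [← hPB, mul_comm P B, mul_comm 2 B, Nat.gcd_mul_left]
        have h1 : Nat.gcd 2 P = 1 := (Nat.prime_two.coprime_iff_not_dvd).mpr hpodd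
        rw [h1, mul_one]
      exact pat1 n hass N B (2 * B) hub hmax (by omega) (by omega) (by nlinarith)
        (by rw [gcdB, gcd2B]) (by omega)
  · -- Case Y : no odd prime power component ≥ 5
    push_neg at hX
    set a := N.factorization 2 with hadef
    set M := N / 2 ^ a with hMdef
    have hM2 : ¬ 2 ∣ M := Nat.not_dvd_ordCompl Nat.prime_two hNne
    have h2aM : 2 ^ a * M = N := Nat.ordProj_mul_ordCompl_eq_self N 2
    have hMdvd : M ∣ N := Nat.ordCompl_dvd N 2
    have hM0 : 0 < M := Nat.ordCompl_pos 2 hNne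
    have hMprime : ∀ q : ℕ, q.Prime → q ∣ M → q = 3 := by
      intro q hq hqM
      have hqN : q ∣ N := hqM.trans hMdvd
      have hq2 : q ≠ 2 := fun h => hM2 (h ▸ hqM)
      have hlt := hX q hq hqN hq2
      have hv1 : q.factorization ≠ 0 → True := fun _ => trivial
      have hvq : 0 < N.factorization q := hq.factorization_pos_of_dvd hNne hqN
      have hle : q ≤ q ^ N.factorization q := Nat.le_self_pow (by omega) q
      have h2le := hq.two_le
      have hq5 : q < 5 := lt_of_le_of_lt hle hlt
      interval_cases q
      · omega
      · rfl
      · exact absurd hq (by decide)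
    have hnine : ¬ (9 : ℕ) ∣ N := by
      intro h9
      have h3N : (3 : ℕ) ∣ N := (by norm_num : (3:ℕ) ∣ 9).trans h9
      have hv : 2 ≤ N.factorization 3 :=
        ((by norm_num : Nat.Prime 3).pow_dvd_iff_le_factorization hNne).mp
          (by norm_num; exact h9)
      have hple : (3 : ℕ) ^ 2 ≤ 3 ^ N.factorization 3 := Nat.pow_le_pow_right (by norm_num) hv
      have := hX 3 (by norm_num) h3N (by norm_num)
      omega
    have hMcase : M = 1 ∨ M = 3 := by
      by_contra hc
      push_neg at hc
      obtain ⟨hM1, hM3⟩ := hc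
      have hq3 : M.minFac = 3 := hMprime _ (Nat.minFac_prime hM1) (Nat.minFac_dvd M)
      obtain ⟨m, hm⟩ : (3 : ℕ) ∣ M := hq3 ▸ Nat.minFac_dvd M
      have hm1 : m ≠ 1 := fun h => hM3 (by rw [hm, h, mul_one])
      have hm0 : m ≠ 0 := fun h => by rw [hm, h, mul_zero] at hM0; omega
      have hq3' : m.minFac = 3 := hMprime _ (Nat.minFac_prime hm1)
        ((Nat.minFac_dvd m).trans ⟨3, by rw [hm, mul_comm]⟩)
      obtain ⟨m', hm'⟩ : (3 : ℕ) ∣ m := hq3' ▸ Nat.minFac_dvd m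
      have h9M : (9 : ℕ) ∣ M := ⟨m', by rw [hm, hm']; ring⟩
      exact hnine (h9M.trans hMdvd)
    rcases hMcase with hM | hM
    · -- N = 2 ^ a
      have hN2a : N = 2 ^ a := by rw [← h2aM, hM, mul_one]
      have hstep := step1 n hass N hub hmax hN5 3 (by omega) (by omega)
        (by rw [hN2a]; exact Nat.Coprime.pow_right a (by decide))
      have h2N : (2 : ℕ) ∣ N := by
        rw [hN2a]
        refine dvd_pow_self 2 ?_
        intro h0
        rw [h0] at hN2a
        simp at hN2a
        omega
      obtain ⟨vp, hvp⟩ := hprime_wit 2 Nat.prime_two h2N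
      have hg := hstep vp
      have hgdvd : Nat.gcd (n vp) N ∣ 2 ^ a := hN2a ▸ Nat.gcd_dvd_right _ _
      obtain ⟨i, hi, hgi⟩ := (Nat.dvd_prime_pow Nat.prime_two).mp hgdvd
      have hi1 : 1 ≤ i := by
        by_contra hi0
        push_neg at hi0
        interval_cases i
        simp at hgi
        omega
      have hpg : (2:ℕ) ∣ Nat.gcd (n vp) N := by
        rw [hgi]
        exact dvd_pow_self 2 (by omega)
      exact hvp (hpg.trans (Nat.gcd_dvd_left _ _))
    · -- N = 3 * 2 ^ a
      set t := 2 ^ a with htdef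
      have hNt : t * 3 = N := by rw [← h2aM, hM]
      have ha2 : 2 ≤ a := by
        by_contra hc
        push_neg at hc
        interval_cases a
        · simp [htdef] at hNt; omega
        · rw [htdef] at hNt; norm_num at hNt; omega
      have ht4 : 4 ≤ t := by
        rw [htdef]
        calc (4:ℕ) = 2 ^ 2 := by norm_num
        _ ≤ 2 ^ a := Nat.pow_le_pow_right (by norm_num) ha2
      have hN12 : 12 ≤ N := by omega
      have h3N : (3 : ℕ) ∣ N := ⟨t, by rw [mul_comm]; exact hNt.symm⟩
      have h2N : (2 : ℕ) ∣ N := by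
        refine Dvd.dvd.trans ?_ ⟨3, hNt.symm⟩
        rw [htdef]
        exact dvd_pow_self 2 (by omega)
      have hstep := step1 n hass N hub hmax hN5 (t + 3) (by omega) (by omega)
        (by
          rw [← hNt]
          have hct3 : Nat.Coprime t 3 := by
            rw [htdef]
            exact Nat.Coprime.pow_left a (by decide)
          exact Nat.Coprime.mul_right (coprime_add_left t 3 hct3)
            (coprime_add_right t 3 hct3))
      have gcd3 : Nat.gcd 3 N = 3 := Nat.gcd_eq_left h3N
      have gcd9 : Nat.gcd 9 N = 3 := by
        have hd9 : Nat.gcd 9 N ∣ 9 := Nat.gcd_dvd_left _ _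
        have hdN : Nat.gcd 9 N ∣ N := Nat.gcd_dvd_right _ _
        have h3g : 3 ∣ Nat.gcd 9 N := Nat.dvd_gcd (by norm_num) h3N
        obtain ⟨i, hi, hgi⟩ := (Nat.dvd_prime_pow (by norm_num : Nat.Prime 3)).mp
          (show Nat.gcd 9 N ∣ 3 ^ 2 from (by norm_num : (9:ℕ) = 3 ^ 2) ▸ hd9)
        interval_cases i
        · exfalso; rw [hgi] at h3g; norm_num at h3g
        · simpa using hgi
        · exfalso
          apply hnine
          have h99 : Nat.gcd 9 N = 9 := by simpa using hgi
          exact h99 ▸ hdN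
      obtain ⟨vw, hvw⟩ := hprime_wit 2 Nat.prime_two h2N
      set y := n vw with hy
      have hy1 : 1 ≤ y := (hub vw).1
      have hyN : y ≤ N := (hub vw).2
      have hgy := hstep vw
      have hgodd : ¬ 2 ∣ Nat.gcd y N := fun h => hvw (h.trans (Nat.gcd_dvd_left _ _))
      have hgdvd3 : Nat.gcd y N ∣ 3 := by
        have hcop : Nat.Coprime t (Nat.gcd y N) := by
          rw [htdef]
          exact (Nat.prime_two.coprime_iff_not_dvd.mpr hgodd).pow_left _
        apply Nat.Coprime.dvd_of_dvd_mul_left hcop.symm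
        rw [hNt]
        exact Nat.gcd_dvd_right _ _
      have hyNd : ¬ N ∣ y := fun h => hvw (h2N.trans h)
      have cY : 1 ≤ (Finset.univ.filter (fun v => ((n v : ZMod N)) = (y : ZMod N))).card :=
        Finset.card_pos.mpr ⟨vw, by simp [hy]⟩
      by_cases ha3 : a = 2
      · -- N = 12
        have hNeq : N = 12 := by rw [← hNt, htdef, ha3]; norm_num
        subst hNeq
        -- value 9 exists
        have c9 := key n hass 12 (by norm_num) hdvdN (y : ZMod 12) ((9:ℕ) : ZMod 12)
          (cast_ne_zero 12 y (by norm_num) hyNd)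
          (cast_ne_zero 12 9 (by norm_num) (by decide))
          (mem_zmul 12 9 y (hgdvd3.trans (by norm_num)))
        have e9 : (Finset.univ.filter (fun v => ((n v : ZMod 12)) = ((9:ℕ) : ZMod 12))).card =
            (Finset.univ.filter (fun v => n v = 9)).card :=
          cnt_eq_count n 12 12 9 hub (by norm_num) (by norm_num)
        have hw9 : ∃ w, n w = 9 := by
          have : 0 < (Finset.univ.filter (fun v => n v = 9)).card := by omega
          obtain ⟨w, hw⟩ := Finset.card_pos.mp this
          exact ⟨w, (Finset.mem_filter.mp hw).2⟩
        -- value 8 exists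
        obtain ⟨v3, hv3⟩ := hprime_wit 3 (by norm_num) h3N
        set z := n v3 with hz
        have hz1 : 1 ≤ z := (hub v3).1
        have hzN : z ≤ 12 := (hub v3).2
        have hgz := hstep v3
        have hgz3 : ¬ 3 ∣ Nat.gcd z 12 := fun h => hv3 (h.trans (Nat.gcd_dvd_left _ _))
        have hgz4 : Nat.gcd z 12 ∣ 4 := by
          have hcop : Nat.Coprime (Nat.gcd z 12) 3 :=
            ((by norm_num : Nat.Prime 3).coprime_iff_not_dvd.mpr hgz3).symm
          exact Nat.Coprime.dvd_of_dvd_mul_right hcop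
            (show Nat.gcd z 12 ∣ 4 * 3 by norm_num; exact Nat.gcd_dvd_right _ _)
        have hzNd : ¬ (12:ℕ) ∣ z := fun h => hv3 ((by norm_num : (3:ℕ) ∣ 12).trans h)
        have cZ : 1 ≤ (Finset.univ.filter (fun v => ((n v : ZMod 12)) = (z : ZMod 12))).card :=
          Finset.card_pos.mpr ⟨v3, by simp [hz]⟩
        have c8 := key n hass 12 (by norm_num) hdvdN (z : ZMod 12) ((8:ℕ) : ZMod 12)
          (cast_ne_zero 12 z (by norm_num) hzNd)
          (cast_ne_zero 12 8 (by norm_num) (by decide))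
          (mem_zmul 12 8 z (hgz4.trans (by norm_num)))
        have e8 : (Finset.univ.filter (fun v => ((n v : ZMod 12)) = ((8:ℕ) : ZMod 12))).card =
            (Finset.univ.filter (fun v => n v = 8)).card :=
          cnt_eq_count n 12 12 8 hub (by norm_num) (by norm_num)
        have hw8 : ∃ w, n w = 8 := by
          have : 0 < (Finset.univ.filter (fun v => n v = 8)).card := by omega
          obtain ⟨w, hw⟩ := Finset.card_pos.mp this
          exact ⟨w, (Finset.mem_filter.mp hw).2⟩
        obtain ⟨w8, hw8'⟩ := hw8
        have hdvd8 : ∃ v, (8:ℕ) ∣ n v := ⟨w8, by rw [hw8']⟩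
        have fin := key n hass 8 (by norm_num) hdvd8 ((9:ℕ) : ZMod 8) ((5:ℕ) : ZMod 8)
          (cast_ne_zero 8 9 (by norm_num) (by decide))
          (cast_ne_zero 8 5 (by norm_num) (by decide))
          (mem_zmul 8 5 9 (by norm_num))
        obtain ⟨w9, hw9'⟩ := hw9
        have lower : 1 ≤ (Finset.univ.filter (fun v => ((n v : ZMod 8)) = ((9:ℕ) : ZMod 8))).card :=
          Finset.card_pos.mpr ⟨w9, by simp [hw9']⟩
        have upper : (Finset.univ.filter (fun v => ((n v : ZMod 8)) = ((5:ℕ) : ZMod 8))).card = 0 := by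
          rw [Finset.card_eq_zero]
          rw [Finset.filter_eq_empty_iff]
          intro v _
          intro hv5
          have hmeq : n v ≡ 5 [MOD 8] := (ZMod.natCast_eq_natCast_iff _ _ _).mp hv5
          have hb1 := (hub v).1
          have hb2 := (hub v).2
          have : n v = 5 := modeq_eq 8 (n v) 5 hmeq (by norm_num) (by omega) (by omega)
          have hgv := hstep v
          rw [this] at hgv
          norm_num at hgv
        omega
      · -- N ≥ 24, use pattern 1 with (3, 9)
        have ha3' : 3 ≤ a := by omega
        have ht8 : 8 ≤ t := by
          rw [htdef]
          calc (8:ℕ) = 2 ^ 3 := by norm_num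
          _ ≤ 2 ^ a := Nat.pow_le_pow_right (by norm_num) ha3'
        have hN24 : 24 ≤ N := by omega
        have c3 := key n hass N hN0 hdvdN (y : ZMod N) ((3:ℕ) : ZMod N)
          (cast_ne_zero N y hN0 hyNd)
          (cast_ne_zero N 3 hN0 (hnotN 3 (by norm_num) (by omega)))
          (mem_zmul N 3 y hgdvd3)
        have e3 : (Finset.univ.filter (fun v => ((n v : ZMod N)) = ((3:ℕ) : ZMod N))).card =
            (Finset.univ.filter (fun v => n v = 3)).card :=
          cnt_eq_count n N N 3 hub (by omega) (by omega)
        exact pat1 n hass N 3 9 hub hmax (by norm_num) (by norm_num) (by omega)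
          (by rw [gcd3, gcd9]) (by omega)

end

/-- Under the Assumption, if the values `n v` are positive with gcd `1` and maximum `N`,
then `φ(N) ≤ 2`; in particular `N ∈ {1, 2, 3, 4, 6}`. -/
theorem totient_max_le_two {S : Type*} [Fintype S] [Nonempty S] (n : S → ℕ)
    (hpos : ∀ v, 0 < n v) (hass : SatisfiesAssumption n)
    (hgcd : Finset.univ.gcd n = 1) (N : ℕ) (hN : N = Finset.univ.sup n) :
    Nat.totient N ≤ 2 ∧ N ∈ ({1, 2, 3, 4, 6} : Set ℕ) := by
  classical
  obtain ⟨v₀⟩ := (inferInstance : Nonempty S)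
  have hub : ∀ v, 1 ≤ n v ∧ n v ≤ N := fun v =>
    ⟨hpos v, hN ▸ Finset.le_sup (Finset.mem_univ v)⟩
  have hmax : ∃ v, n v = N := by
    obtain ⟨w, -, hw⟩ := Finset.exists_mem_eq_sup Finset.univ Finset.univ_nonempty n
    exact ⟨w, by rw [hN, hw]⟩
  have hN1 : 1 ≤ N := le_trans (hub v₀).1 (hub v₀).2
  have hmem : N ∈ ({1, 2, 3, 4, 6} : Set ℕ) := by
    by_contra hnot
    simp only [Set.mem_insert_iff, Set.mem_singleton_iff] at hnot
    push_neg at hnot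
    obtain ⟨h1, h2, h3, h4, h6⟩ := hnot
    exact contra_main n hass hgcd N hub hmax (by omega) h6
  refine ⟨?_, hmem⟩
  simp only [Set.mem_insert_iff, Set.mem_singleton_iff] at hmem
  rcases hmem with h | h | h | h | h <;> subst h <;> decide
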